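/- Let Ω ⊆ ℂⁿ be an open connected set, let A_p > 0 (p ≥ 1) with A_p → ∞, and for each p let k_p : Ω → ℂ be a holomorphic function with no zeros on Ω. Let φ_p, φ'_p : Ω → ℝ be continuous functions satisfying φ_p − φ'_p = log|k_p| on Ω, and suppose φ_p/A_p → φ and φ'_p/A_p → φ' locally uniformly on Ω, where φ, φ' are continuous. Then the function ψ := φ − φ' is pluriharmonic on Ω, i.e., ψ is locally the real part of a holomorphic function. -/

import Mathlib

open MeasureTheory Metric Filter Topology

noncomputable section

/-- `ℂⁿ` with its Euclidean (Hermitian) norm. -/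
abbrev Cn (n : ℕ) := EuclideanSpace ℂ (Fin n)

noncomputable instance (n : ℕ) : MeasurableSpace (Cn n) := borel _
instance (n : ℕ) : BorelSpace (Cn n) := ⟨rfl⟩

/-- The sub-mean value inequality of `u` at `a` on the circle `{a + ρ e^{iθ} b : θ ∈ ℝ}`,
formulated (equivalently, by upper semicontinuity of `u`) via continuous majorants:
`u a ≤ (2π)⁻¹ ∫₀^{2π} u(a + ρ e^{iθ} b) dθ`. -/
def SubmeanOnCircle {n : ℕ} (u : Cn n → EReal) (a b : Cn n) (ρ : ℝ) : Prop :=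
  ∀ g : ℝ → ℝ, Continuous g →
    (∀ θ : ℝ, u (a + (↑ρ * Complex.exp (θ * Complex.I)) • b) ≤ (g θ : EReal)) →
    u a ≤ (((2 * Real.pi)⁻¹ * ∫ θ in (0 : ℝ)..(2 * Real.pi), g θ : ℝ) : EReal)

/-- `u : Ω → [-∞, ∞)` is plurisubharmonic on `Ω`: it is upper semicontinuous, does not take the
value `+∞`, is not identically `-∞` on any connected component of `Ω`, and satisfies the
sub-mean value inequality on small circles in every complex line. -/
def PshOn {n : ℕ} (u : Cn n → EReal) (Ω : Set (Cn n)) : Prop :=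
  UpperSemicontinuousOn u Ω ∧
  (∀ x ∈ Ω, u x ≠ ⊤) ∧
  (∀ x ∈ Ω, ∃ y ∈ connectedComponentIn Ω x, u y ≠ ⊥) ∧
  (∀ a ∈ Ω, ∀ b : Cn n, ∃ ε > 0, ∀ ρ : ℝ, 0 < ρ → ρ < ε →
    (∀ θ : ℝ, a + (↑ρ * Complex.exp (θ * Complex.I)) • b ∈ Ω) ∧ SubmeanOnCircle u a b ρ)

/-- A real-valued function is plurisubharmonic on `Ω` if it is so as an
extended-real-valued function. -/
def PshOnR {n : ℕ} (v : Cn n → ℝ) (Ω : Set (Cn n)) : Prop :=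
  PshOn (fun z => (v z : EReal)) Ω

/-- `ψ` is pluriharmonic on `Ω`: near every point of `Ω` it is the real part of a
holomorphic function. -/
def PluriharmonicOn {n : ℕ} (ψ : Cn n → ℝ) (Ω : Set (Cn n)) : Prop :=
  ∀ x ∈ Ω, ∃ U : Set (Cn n), IsOpen U ∧ x ∈ U ∧ U ⊆ Ω ∧
    ∃ g : Cn n → ℂ, DifferentiableOn ℂ g U ∧ ∀ y ∈ U, ψ y = (g y).re

section AuxPluriharmonic
open Set Complex MeasureTheory intervalIntegral
set_option linter.unusedSectionVars false
set_option linter.unusedVariables false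
set_option maxHeartbeats 1000000


/-- Borel–Carathéodory via Schwarz, one variable, at half radius. -/
lemma bc1 {r ε : ℝ} (hr : 0 < r) (hε : 0 < ε) {F : ℂ → ℂ}
    (hF : DifferentiableOn ℂ F (ball 0 r)) (h0 : F 0 = 0)
    (hRe : ∀ s ∈ ball (0:ℂ) r, (F s).re ≤ ε) :
    ∀ s ∈ ball (0:ℂ) r, ‖s‖ ≤ r/2 → ‖F s‖ ≤ 4*ε := by
  have hden : ∀ s ∈ ball (0:ℂ) r, (4*ε - F s) ≠ 0 := by
    intro s hs h
    have h4 : ((4:ℂ)*ε - F s).re = 4*ε - (F s).re := by simp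
    have : ((4:ℂ)*ε - F s).re = 0 := by rw [h]; simp
    rw [h4] at this
    have h1 := hRe s hs
    nlinarith [hε, h1]
  set W : ℂ → ℂ := fun s => F s / (4*ε - F s) with hW
  have hWd : DifferentiableOn ℂ W (ball 0 r) := by
    apply DifferentiableOn.div hF ((differentiableOn_const _).sub hF) hden
  have hW0 : W 0 = 0 := by simp [hW, h0]
  have hlt : ∀ s ∈ ball (0:ℂ) r, ‖W s‖ < 1 := by
    intro s hs
    have hd := hden s hs
    rw [hW]
    simp only [norm_div]
    rw [div_lt_one (norm_pos_iff.mpr hd)]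
    have : Complex.normSq (F s) < Complex.normSq (4*ε - F s) := by
      have h1 := hRe s hs
      have h4 : ((4:ℂ)*ε - F s).re = 4*ε - (F s).re := by simp
      have h4' : ((4:ℂ)*ε - F s).im = -(F s).im := by simp
      rw [Complex.normSq_apply, Complex.normSq_apply, h4, h4']
      nlinarith [hε, h1]
    calc ‖F s‖ = Real.sqrt (Complex.normSq (F s)) := Complex.norm_def _
      _ < Real.sqrt (Complex.normSq (4*ε - F s)) := by
          exact Real.sqrt_lt_sqrt (Complex.normSq_nonneg _) this
      _ = ‖4*ε - F s‖ := (Complex.norm_def _).symm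
  have hmaps : Set.MapsTo W (ball 0 r) (ball (W 0) 1) := by
    intro s hs
    rw [hW0, mem_ball, dist_zero_right]
    exact hlt s hs
  intro s hs hhalf
  have hSch := Complex.dist_le_div_mul_dist_of_mapsTo_ball hWd (hmaps.mono_right ball_subset_closedBall) hs
  rw [hW0, dist_zero_right, dist_zero_right] at hSch
  have hWs : ‖W s‖ ≤ 1/2 := by
    calc ‖W s‖ ≤ 1 / r * ‖s‖ := hSch
      _ ≤ 1 / r * (r/2) := by
          apply mul_le_mul_of_nonneg_left hhalf (by positivity)
      _ = 1/2 := by field_simp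
  -- F s (1 + W s) = 4 ε W s
  have hkey : F s * (1 + W s) = 4*ε * W s := by
    have hd := hden s hs
    rw [hW]
    field_simp
    ring
  have h1W : ‖1 + W s‖ ≥ 1/2 := by
    calc (1:ℝ)/2 = 1 - 1/2 := by norm_num
      _ ≤ 1 - ‖W s‖ := by linarith [hWs]
      _ ≤ ‖1 + W s‖ := by
          have := norm_add_le (1 + W s) (-W s)
          simp at this
          linarith [this]
  have h1Wne : (1 + W s) ≠ 0 := by
    intro h; rw [h] at h1W; simp at h1W; linarith
  have : ‖F s‖ * ‖1 + W s‖ = 4*ε * ‖W s‖ := by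
    rw [← norm_mul, hkey, norm_mul]
    have : ‖4*(ε:ℂ)‖ = 4*ε := by
      rw [show (4*(ε:ℂ)) = ((4*ε : ℝ) : ℂ) by push_cast; ring, Complex.norm_real, Real.norm_eq_abs,
        abs_of_pos (by positivity)]
    rw [this]
  calc ‖F s‖ = (4*ε * ‖W s‖) / ‖1 + W s‖ := by
        rw [← this]; field_simp
    _ ≤ (4*ε * (1/2)) / (1/2) := by
        apply div_le_div₀ (by positivity) _ (by norm_num) h1W
        apply mul_le_mul_of_nonneg_left hWs (by positivity)
    _ = 4*ε := by ring

variable {E : Type*} [NormedAddCommGroup E] [NormedSpace ℂ E]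

/-- The affine line map `s ↦ x₀ + s • u` sends `ball 0 r` to `ball x₀ r` when `‖u‖ = 1`. -/
lemma line_diff {x₀ : E} {u : E} (f : E → ℂ) {r : ℝ}
    (hf : DifferentiableOn ℂ f (ball x₀ r)) (hu : ‖u‖ = 1) :
    DifferentiableOn ℂ (fun s : ℂ => f (x₀ + s • u)) (ball 0 r) ∧
      ∀ s : ℂ, s ∈ ball (0:ℂ) r → x₀ + s • u ∈ ball x₀ r := by
  have hmem : ∀ s : ℂ, s ∈ ball (0:ℂ) r → x₀ + s • u ∈ ball x₀ r := by
    intro s hs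
    rw [mem_ball, dist_eq_norm] at hs ⊢
    simpa [norm_smul, hu] using hs
  refine ⟨?_, hmem⟩
  have hline : DifferentiableOn ℂ (fun s : ℂ => x₀ + s • u) (ball 0 r) := by
    apply DifferentiableOn.const_add
    exact (differentiable_id.smul_const u).differentiableOn
  exact hf.comp hline hmem

/-- Multivariable Borel–Carathéodory: bound the modulus by a bound on `|Re|`, at half radius. -/
lemma bc2 {x₀ : E} {r ε : ℝ} (hr : 0 < r) (hε : 0 < ε) {d : E → ℂ}
    (hd : DifferentiableOn ℂ d (ball x₀ r)) (h0 : d x₀ = 0)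
    (hRe : ∀ z ∈ ball x₀ r, |(d z).re| ≤ ε) :
    ∀ z ∈ ball x₀ (r/2), ‖d z‖ ≤ 4*ε := by
  intro z hz
  rcases eq_or_ne z x₀ with rfl | hne
  · rw [h0]; simp; positivity
  · set u : E := ‖z - x₀‖⁻¹ • (z - x₀) with hu_def
    have hzx : (0:ℝ) < ‖z - x₀‖ := by
      rw [norm_pos_iff, sub_ne_zero]; exact hne
    have hu : ‖u‖ = 1 := by
      rw [hu_def, norm_smul, norm_inv, norm_norm, inv_mul_cancel₀ hzx.ne']
    obtain ⟨hFd, hFmem⟩ := line_diff d hd (r := r) hu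
    have key := bc1 hr hε (F := fun s : ℂ => d (x₀ + s • u)) hFd (by simp [h0])
      (fun s hs => (abs_le.mp (hRe _ (hFmem s hs))).2)
    have hzball : (‖z - x₀‖ : ℂ) ∈ ball (0:ℂ) r := by
      rw [mem_ball, dist_zero_right, Complex.norm_real, Real.norm_eq_abs,
        abs_of_pos hzx]
      have := mem_ball.mp hz
      rw [dist_eq_norm] at this
      linarith [this, hr]
    have hrepr : x₀ + (‖z - x₀‖ : ℂ) • u = z := by
      rw [hu_def, show ((‖z - x₀‖ : ℝ) : ℂ) = algebraMap ℝ ℂ ‖z - x₀‖ from rfl,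
        algebraMap_smul, smul_smul, mul_inv_cancel₀ hzx.ne', one_smul]
      abel
    have habs : ‖(‖z - x₀‖ : ℂ)‖ ≤ r/2 := by
      rw [Complex.norm_real, Real.norm_eq_abs, abs_of_pos hzx]
      have := mem_ball.mp hz
      rw [dist_eq_norm] at this
      linarith
    have := key _ hzball habs
    rw [hrepr] at this
    exact this

/-- Cauchy-type bound for the Fréchet derivative from a bound on the modulus, via Schwarz. -/
lemma derivBound {x₀ : E} {ρ M : ℝ} (hρ : 0 < ρ) (hM : 0 < M) {d : E → ℂ}
    (hd : DifferentiableOn ℂ d (ball x₀ ρ))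
    (hb : ∀ z ∈ ball x₀ ρ, ‖d z‖ ≤ M) :
    ‖fderiv ℂ d x₀‖ ≤ 3*M/ρ := by
  have hx₀ : x₀ ∈ ball x₀ ρ := mem_ball_self hρ
  apply ContinuousLinearMap.opNorm_le_bound _ (by positivity)
  intro b
  rcases eq_or_ne b 0 with rfl | hbne
  · simp
  · have hbpos : (0:ℝ) < ‖b‖ := norm_pos_iff.mpr hbne
    set u : E := ‖b‖⁻¹ • b with hu_def
    have hu : ‖u‖ = 1 := by
      rw [hu_def, norm_smul, norm_inv, norm_norm, inv_mul_cancel₀ hbpos.ne']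
    obtain ⟨hFd, hFmem⟩ := line_diff d hd (r := ρ) hu
    set G : ℂ → ℂ := fun s => d (x₀ + s • u) with hG_def
    -- G maps ball 0 ρ into ball (G 0) (3M)
    have hmaps : Set.MapsTo G (ball 0 ρ) (ball (G 0) (3*M)) := by
      intro s hs
      rw [mem_ball, dist_eq_norm]
      have h1 : ‖G s‖ ≤ M := hb _ (hFmem s hs)
      have h2 : ‖G 0‖ ≤ M := hb _ (hFmem 0 (by simpa using hρ))
      calc ‖G s - G 0‖ ≤ ‖G s‖ + ‖G 0‖ := norm_sub_le _ _
        _ ≤ M + M := add_le_add h1 h2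
        _ < 3*M := by linarith
    have hSch : ‖deriv G 0‖ ≤ (3*M) / ρ :=
      Complex.norm_deriv_le_div_of_mapsTo_ball hFd (hmaps.mono_right ball_subset_closedBall) hρ
    -- deriv G 0 = fderiv d x₀ u
    have hdAt : DifferentiableAt ℂ d x₀ := by
      have := hd.differentiableAt (isOpen_ball.mem_nhds hx₀)
      exact this
    have hline : HasDerivAt (fun s : ℂ => x₀ + s • u) u 0 := by
      have h1 : HasDerivAt (fun s : ℂ => s • u) ((1:ℂ) • u) 0 := by
        simpa using (hasDerivAt_id (0:ℂ)).smul_const u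
      simpa using h1.const_add x₀
    have hGder : HasDerivAt G (fderiv ℂ d x₀ u) 0 := by
      have hfd : HasFDerivAt d (fderiv ℂ d x₀) (x₀ + (0:ℂ) • u) := by
        simpa using hdAt.hasFDerivAt
      have := hfd.comp_hasDerivAt (0:ℂ) hline
      exact this
    have hderiv : deriv G 0 = fderiv ℂ d x₀ u := hGder.deriv
    have hub : ‖fderiv ℂ d x₀ u‖ ≤ 3*M/ρ := by rw [← hderiv]; exact hSch
    have hbu : b = (‖b‖ : ℝ) • u := by
      rw [hu_def, smul_smul, mul_inv_cancel₀ hbpos.ne', one_smul]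
    calc ‖fderiv ℂ d x₀ b‖ = ‖fderiv ℂ d x₀ ((‖b‖ : ℝ) • u)‖ := by rw [← hbu]
      _ = ‖b‖ * ‖fderiv ℂ d x₀ u‖ := by
          rw [ContinuousLinearMap.map_smul_of_tower, norm_smul, norm_norm]
      _ ≤ ‖b‖ * (3*M/ρ) := by
          exact mul_le_mul_of_nonneg_left hub hbpos.le
      _ = 3*M/ρ * ‖b‖ := by ring

variable {E : Type*} [NormedAddCommGroup E] [NormedSpace ℂ E]
variable {f : E → ℂ} {x₀ : E} {R : ℝ}



private def Fsl (f : E → ℂ) (x₀ : E) (z : E) : ℂ → ℂ := fun s => f (x₀ + s • (z - x₀))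

private def qsl (f : E → ℂ) (x₀ : E) (z : E) : ℝ → ℂ :=
  fun t => deriv (Fsl f x₀ z) t / Fsl f x₀ z t

private def hlog (f : E → ℂ) (x₀ : E) : E → ℂ :=
  fun z => Complex.log (f x₀) + ∫ t in (0:ℝ)..1, qsl f x₀ z t

private def tau (t : ℝ) : ℝ := max 0 (min 1 t)

private lemma tau_cont : Continuous tau := by
  unfold tau; fun_prop

private lemma tau_mem (t : ℝ) : tau t ∈ Icc (0:ℝ) 1 := by
  constructor
  · exact le_max_left _ _
  · simp only [tau, max_le_iff]
    constructor
    · norm_num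
    · exact min_le_left _ _

private lemma tau_eq {t : ℝ} (ht : t ∈ Icc (0:ℝ) 1) : tau t = t := by
  simp only [tau, min_eq_right ht.2, max_eq_right ht.1]

private lemma Ssl_mem {z : E} {s : ℂ} (hs : ‖s‖ * ‖z - x₀‖ < R) :
    x₀ + s • (z - x₀) ∈ ball x₀ R := by
  rw [mem_ball, dist_eq_norm]
  simpa [norm_smul] using hs

private lemma Fsl_diff (hf : DifferentiableOn ℂ f (ball x₀ R)) (z : E) :
    DifferentiableOn ℂ (Fsl f x₀ z) {s : ℂ | ‖s‖ * ‖z - x₀‖ < R} := by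
  apply hf.comp
  · apply DifferentiableOn.const_add
    exact (differentiable_id.smul_const (z - x₀)).differentiableOn
  · intro s hs
    exact Ssl_mem hs

private lemma hlog_contOn (hR : 0 < R) (hf : DifferentiableOn ℂ f (ball x₀ R))
    (hnz : ∀ w ∈ ball x₀ R, f w ≠ 0) :
    ContinuousOn (hlog f x₀) (ball x₀ R) := by
  intro z₀ hz₀
  apply ContinuousWithinAt.mono_of_mem_nhdsWithin (t := ball x₀ R) ?_ self_mem_nhdsWithin
  -- it suffices to prove continuity on a small ball around z₀
  set c₀ : ℝ := ‖z₀ - x₀‖ with hc₀def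
  have hc₀R : c₀ < R := by rwa [mem_ball, dist_eq_norm] at hz₀
  have hc₀0 : 0 ≤ c₀ := norm_nonneg _
  set δ : ℝ := (R - c₀)/2 with hδdef
  have hδ : 0 < δ := by simp only [hδdef]; linarith
  set M : ℝ := c₀ + δ with hMdef
  have hM : 0 < M := by positivity
  have hMR : M < R := by simp only [hMdef, hδdef]; linarith
  set ρ : ℝ := (R - M)/(2*M) with hρdef
  have hρ : 0 < ρ := by
    apply div_pos (by linarith) (by linarith)
  have hρM : (1+ρ)*M = (R+M)/2 := by
    rw [hρdef, add_mul, one_mul, div_mul_eq_mul_div, mul_div_mul_right _ _ hM.ne']; ring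
  have hzM : ∀ z ∈ ball z₀ δ, ‖z - x₀‖ < M := by
    intro z hz
    calc ‖z - x₀‖ ≤ ‖z - z₀‖ + ‖z₀ - x₀‖ := norm_sub_le_norm_sub_add_norm_sub z z₀ x₀
      _ < δ + c₀ := by
          have := mem_ball.mp hz
          rw [dist_eq_norm] at this
          linarith
      _ = M := by rw [hMdef]; ring
  have hbound : ∀ z ∈ ball z₀ δ, (1+ρ) * ‖z - x₀‖ < R := by
    intro z hz
    calc (1+ρ) * ‖z - x₀‖ < (1+ρ) * M :=
          mul_lt_mul_of_pos_left (hzM z hz) (by linarith)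
      _ = (R+M)/2 := hρM
      _ < R := by linarith
  have hmemB : ∀ z ∈ ball z₀ δ, ∀ ζ : ℂ, ‖ζ‖ ≤ 1 + ρ → ‖ζ‖ * ‖z - x₀‖ < R := by
    intro z hz ζ hζ
    calc ‖ζ‖ * ‖z - x₀‖ ≤ (1+ρ) * ‖z - x₀‖ :=
          mul_le_mul_of_nonneg_right hζ (norm_nonneg _)
      _ < R := hbound z hz
  -- the explicit parametric formula
  set X := ↥(ball z₀ δ)
  set g1 : X × ℝ → ℝ → ℂ := fun p θ =>
    (circleMap 0 ρ θ * I) * (((circleMap 0 ρ θ)^2)⁻¹ *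
      f (x₀ + (((tau p.2 : ℝ) : ℂ) + circleMap 0 ρ θ) • ((p.1 : E) - x₀))) with hg1
  have harg : ∀ (p : X × ℝ) (θ : ℝ),
      x₀ + (((tau p.2 : ℝ) : ℂ) + circleMap 0 ρ θ) • ((p.1 : E) - x₀) ∈ ball x₀ R := by
    intro p θ
    apply Ssl_mem
    apply hmemB _ p.1.2
    calc ‖((tau p.2 : ℝ) : ℂ) + circleMap 0 ρ θ‖
        ≤ ‖((tau p.2 : ℝ) : ℂ)‖ + ‖circleMap 0 ρ θ‖ := norm_add_le _ _
      _ ≤ 1 + ρ := by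
          apply add_le_add
          · rw [Complex.norm_real, Real.norm_eq_abs, _root_.abs_of_nonneg (tau_mem p.2).1]
            exact (tau_mem p.2).2
          · rw [norm_circleMap_zero, abs_of_pos hρ]
  have hg1c : Continuous (Function.uncurry g1) := by
    have hcm : Continuous fun q : (X × ℝ) × ℝ => circleMap 0 ρ q.2 :=
      (continuous_circleMap 0 ρ).comp continuous_snd
    have hargc : Continuous fun q : (X × ℝ) × ℝ =>
        x₀ + (((tau q.1.2 : ℝ) : ℂ) + circleMap 0 ρ q.2) • ((q.1.1 : E) - x₀) := by
      apply continuous_const.add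
      apply Continuous.smul
      · apply Continuous.add
        · exact Complex.continuous_ofReal.comp (tau_cont.comp (continuous_snd.comp continuous_fst))
        · exact hcm
      · exact (continuous_subtype_val.comp (continuous_fst.comp continuous_fst)).sub
          continuous_const
    have hfc : Continuous fun q : (X × ℝ) × ℝ =>
        f (x₀ + (((tau q.1.2 : ℝ) : ℂ) + circleMap 0 ρ q.2) • ((q.1.1 : E) - x₀)) :=
      hf.continuousOn.comp_continuous hargc fun q => harg q.1 q.2
    apply Continuous.mul
    · exact hcm.mul continuous_const
    · apply Continuous.mul
      · apply Continuous.inv₀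
        · exact hcm.pow 2
        · intro q
          exact pow_ne_zero _ (circleMap_ne_center hρ.ne')
      · exact hfc
  have hg2c : Continuous fun p : X × ℝ => ∫ θ in (0:ℝ)..(2*Real.pi), g1 p θ :=
    continuous_parametric_intervalIntegral_of_continuous' hg1c 0 (2*Real.pi)
  set g3 : X → ℝ → ℂ := fun zz t =>
    ((2*Real.pi*Complex.I : ℂ))⁻¹ * (∫ θ in (0:ℝ)..(2*Real.pi), g1 (zz, t) θ) /
      f (x₀ + ((tau t : ℝ) : ℂ) • ((zz:E) - x₀)) with hg3
  have hdenmem : ∀ (zz : X) (t : ℝ), x₀ + ((tau t : ℝ) : ℂ) • ((zz:E) - x₀) ∈ ball x₀ R := by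
    intro zz t
    apply Ssl_mem
    apply hmemB _ zz.2
    rw [Complex.norm_real, Real.norm_eq_abs, _root_.abs_of_nonneg (tau_mem t).1]
    linarith [(tau_mem t).2, hρ]
  have hg3c : Continuous (Function.uncurry g3) := by
    apply Continuous.div
    · apply continuous_const.mul
      exact hg2c
    · apply hf.continuousOn.comp_continuous
      · apply continuous_const.add
        apply Continuous.smul
        · exact Complex.continuous_ofReal.comp (tau_cont.comp continuous_snd)
        · exact (continuous_subtype_val.comp continuous_fst).sub continuous_const
      · exact fun q => hdenmem q.1 q.2
    · intro q
      exact hnz _ (hdenmem q.1 q.2)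
  -- the formula agrees with hlog on the small ball
  have hEq : ∀ zz : X, hlog f x₀ ↑zz =
      Complex.log (f x₀) + ∫ t in (0:ℝ)..1, g3 zz t := by
    intro zz
    rcases zz with ⟨z, hz⟩
    simp only [hlog]
    congr 1
    apply intervalIntegral.integral_congr
    intro t ht
    rw [uIcc_of_le (by norm_num : (0:ℝ) ≤ 1)] at ht
    have htau : tau t = t := tau_eq ht
    -- Cauchy integral formula for the derivative of the slice
    have hsub : closedBall (t : ℂ) ρ ⊆ {s : ℂ | ‖s‖ * ‖z - x₀‖ < R} := by
      intro ζ hζ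
      simp only [Set.mem_setOf_eq]
      apply hmemB z hz
      calc ‖ζ‖ ≤ ‖(t:ℂ)‖ + ‖ζ - (t:ℂ)‖ := by
            simpa using norm_add_le (t:ℂ) (ζ - t)
        _ ≤ 1 + ρ := by
            apply add_le_add
            · rw [Complex.norm_real, Real.norm_eq_abs, _root_.abs_of_nonneg ht.1]
              exact ht.2
            · rwa [← mem_closedBall_iff_norm]
    have hdiffcl : DiffContOnCl ℂ (Fsl f x₀ z) (ball (t:ℂ) ρ) := by
      apply DifferentiableOn.diffContOnCl
      apply (Fsl_diff hf z).mono
      rwa [closure_ball _ hρ.ne']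
    have hderiv : deriv (Fsl f x₀ z) (t:ℂ) = (2 * Real.pi * I : ℂ)⁻¹ •
        ∮ ζ in C((t:ℂ), ρ), (ζ - (t:ℂ)) ^ (-2 : ℤ) • Fsl f x₀ z ζ := by
      have h := hdiffcl.deriv_eq_smul_circleIntegral hρ
      rw [show (fun ζ => (ζ - (t:ℂ)) ^ (-2 : ℤ) • Fsl f x₀ z ζ) =
          fun ζ => (1 / (ζ - (t:ℂ)) ^ 2) • Fsl f x₀ z ζ from
          funext fun ζ => by simp [zpow_neg, one_div], h, smul_smul,
        inv_mul_cancel₀ Complex.two_pi_I_ne_zero, one_smul]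
    have hcirc : (∮ ζ in C((t:ℂ), ρ), (ζ - (t:ℂ)) ^ (-2 : ℤ) • Fsl f x₀ z ζ)
        = ∫ θ in (0:ℝ)..(2*Real.pi), g1 (⟨z, hz⟩, t) θ := by
      rw [circleIntegral]
      apply intervalIntegral.integral_congr
      intro θ _
      simp only [hg1, deriv_circleMap, circleMap_sub_center, smul_eq_mul]
      have hcm_add : circleMap (t:ℂ) ρ θ = (t:ℂ) + circleMap 0 ρ θ := by
        have := circleMap_sub_center (t:ℂ) ρ θ
        linear_combination this
      rw [hcm_add, htau]
      rw [zpow_neg, show ((2:ℤ) : ℤ) = (2:ℕ) from rfl, zpow_natCast]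
      simp only [Fsl]
    have hq : qsl f x₀ z t = g3 ⟨z, hz⟩ t := by
      simp only [qsl, hg3, htau]
      rw [hderiv, hcirc]
      simp only [Fsl, smul_eq_mul]
    exact hq
  -- conclude
  have hcont : Continuous fun zz : X => hlog f x₀ ↑zz := by
    have : (fun zz : X => hlog f x₀ ↑zz) =
        fun zz : X => Complex.log (f x₀) + ∫ t in (0:ℝ)..1, g3 zz t := funext hEq
    rw [this]
    exact continuous_const.add
      (continuous_parametric_intervalIntegral_of_continuous' hg3c 0 1)
  have hconton : ContinuousOn (hlog f x₀) (ball z₀ δ) :=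
    continuousOn_iff_continuous_restrict.mpr hcont
  exact (hconton.continuousAt (isOpen_ball.mem_nhds (mem_ball_self hδ))).continuousWithinAt


private lemma Ssl_open (z : E) : IsOpen {s : ℂ | ‖s‖ * ‖z - x₀‖ < R} :=
  isOpen_lt (by fun_prop) continuous_const


private lemma qsl_contOn (hf : DifferentiableOn ℂ f (ball x₀ R))
    (hnz : ∀ w ∈ ball x₀ R, f w ≠ 0) (z : E) :
    ContinuousOn (qsl f x₀ z) {t : ℝ | |t| * ‖z - x₀‖ < R} := by
  have hFan : AnalyticOnNhd ℂ (Fsl f x₀ z) {s : ℂ | ‖s‖ * ‖z - x₀‖ < R} :=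
    (Fsl_diff hf z).analyticOnNhd (Ssl_open z)
  have hdc : ContinuousOn (deriv (Fsl f x₀ z)) {s : ℂ | ‖s‖ * ‖z - x₀‖ < R} :=
    hFan.deriv.continuousOn
  have hFc : ContinuousOn (Fsl f x₀ z) {s : ℂ | ‖s‖ * ‖z - x₀‖ < R} :=
    (Fsl_diff hf z).continuousOn
  have hsub : ∀ t : ℝ, |t| * ‖z - x₀‖ < R → ((t:ℂ) ∈ {s : ℂ | ‖s‖ * ‖z - x₀‖ < R}) := by
    intro t ht
    simpa [Complex.norm_real, Real.norm_eq_abs] using ht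
  apply ContinuousOn.div
  · exact hdc.comp Complex.continuous_ofReal.continuousOn fun t ht => hsub t ht
  · exact hFc.comp Complex.continuous_ofReal.continuousOn fun t ht => hsub t ht
  · intro t ht
    exact hnz _ (Ssl_mem (by simpa [Complex.norm_real, Real.norm_eq_abs] using ht))


private lemma Icc_subset_Tsl {z : E} (hz : z ∈ ball x₀ R) :
    ∀ t : ℝ, |t| ≤ 1 → |t| * ‖z - x₀‖ < R := by
  intro t ht
  have hz' : ‖z - x₀‖ < R := by rwa [mem_ball, dist_eq_norm] at hz
  calc |t| * ‖z - x₀‖ ≤ 1 * ‖z - x₀‖ :=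
        mul_le_mul_of_nonneg_right ht (norm_nonneg _)
    _ = ‖z - x₀‖ := one_mul _
    _ < R := hz'


private lemma exp_hlog (hR : 0 < R) (hf : DifferentiableOn ℂ f (ball x₀ R))
    (hnz : ∀ w ∈ ball x₀ R, f w ≠ 0) :
    ∀ z ∈ ball x₀ R, Complex.exp (hlog f x₀ z) = f z := by
  intro z hz
  set Tz : Set ℝ := {t : ℝ | |t| * ‖z - x₀‖ < R} with hTz
  have hTopen : IsOpen Tz := isOpen_lt (by fun_prop) continuous_const
  have hqc : ContinuousOn (qsl f x₀ z) Tz := qsl_contOn hf hnz z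
  have hsubT : Icc (-1 : ℝ) 1 ⊆ Tz := by
    intro t ht
    exact Icc_subset_Tsl hz t (abs_le.mpr ⟨ht.1, ht.2⟩)
  set m : ℝ → ℂ := fun t => ∫ s in (0:ℝ)..t, qsl f x₀ z s with hm
  have hint : ∀ t ∈ Icc (0:ℝ) 1, IntervalIntegrable (qsl f x₀ z) volume 0 t := by
    intro t ht
    apply ContinuousOn.intervalIntegrable
    apply hqc.mono
    intro s hs
    rw [Set.uIcc_of_le ht.1] at hs
    exact hsubT ⟨by linarith [hs.1], by linarith [hs.2, ht.2]⟩
  have hmder : ∀ t ∈ Icc (0:ℝ) 1, HasDerivAt m (qsl f x₀ z t) t := by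
    intro t ht
    have htT : t ∈ Tz := hsubT ⟨by linarith [ht.1], by linarith [ht.2]⟩
    exact intervalIntegral.integral_hasDerivAt_right (hint t ht)
      (hqc.stronglyMeasurableAtFilter hTopen t htT)
      (hqc.continuousAt (hTopen.mem_nhds htT))
  have hFder : ∀ t ∈ Icc (0:ℝ) 1, HasDerivAt (fun t : ℝ => Fsl f x₀ z t)
      (deriv (Fsl f x₀ z) t) t := by
    intro t ht
    have htS : (t:ℂ) ∈ {s : ℂ | ‖s‖ * ‖z - x₀‖ < R} := by
      simp only [Set.mem_setOf_eq, Complex.norm_real, Real.norm_eq_abs]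
      exact Icc_subset_Tsl hz t (abs_le.mpr ⟨by linarith [ht.1], ht.2⟩)
    have := ((Fsl_diff hf z).differentiableAt ((Ssl_open z).mem_nhds htS)).hasDerivAt
    exact this.comp_ofReal
  set φ : ℝ → ℂ := fun t => Fsl f x₀ z t * Complex.exp (-m t) with hφ
  have hφder : ∀ t ∈ Icc (0:ℝ) 1, HasDerivAt φ 0 t := by
    intro t ht
    have hFt : Fsl f x₀ z t ≠ 0 := by
      apply hnz
      apply Ssl_mem
      simpa [Complex.norm_real, Real.norm_eq_abs] using
        Icc_subset_Tsl hz t (abs_le.mpr ⟨by linarith [ht.1], ht.2⟩)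
    have hexp : HasDerivAt (fun t => Complex.exp (-m t))
        (Complex.exp (-m t) * (-(qsl f x₀ z t))) t := ((hmder t ht).neg).cexp
    have := (hFder t ht).mul hexp
    refine this.congr_deriv ?_
    simp only [qsl]
    field_simp
    ring
  have hφc : ContinuousOn φ (Icc 0 1) := fun t ht => ((hφder t ht).continuousAt).continuousWithinAt
  have hconst : φ 1 = φ 0 :=
    constant_of_has_deriv_right_zero hφc
      (fun t ht => ((hφder t (Set.mem_Icc.mpr ⟨ht.1, ht.2.le⟩)).hasDerivWithinAt)) 1
      (Set.mem_Icc.mpr ⟨by norm_num, le_refl 1⟩)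
  have hm0 : m 0 = 0 := intervalIntegral.integral_same
  have hF1 : Fsl f x₀ z 1 = f z := by simp [Fsl]
  have hF0 : Fsl f x₀ z 0 = f x₀ := by simp [Fsl]
  rw [hφ] at hconst
  simp only [hm0, hF1, hF0, Complex.ofReal_one, Complex.ofReal_zero, neg_zero,
    Complex.exp_zero, mul_one] at hconst
  -- hconst : f z * exp (-m 1) = f x₀
  have hfz : f z = f x₀ * Complex.exp (m 1) := by
    have := congrArg (· * Complex.exp (m 1)) hconst
    rw [mul_assoc, ← Complex.exp_add] at this
    simp at this
    exact this
  rw [hlog, Complex.exp_add, Complex.exp_log (hnz x₀ (mem_ball_self hR))]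
  rw [hfz]



private lemma ball_slit : ∀ w ∈ ball (1:ℂ) (1/2), w ∈ Complex.slitPlane := by
  intro w hw
  rw [mem_ball, dist_eq_norm] at hw
  rw [Complex.mem_slitPlane_iff]
  left
  have h1 : |(w - 1).re| ≤ ‖w - 1‖ := Complex.abs_re_le_norm _
  have h2 : (w - 1).re = w.re - 1 := by simp
  rw [h2] at h1
  have := abs_le.mp h1
  linarith [this.1]


private lemma hlog_diffOn (hR : 0 < R) (hf : DifferentiableOn ℂ f (ball x₀ R))
    (hnz : ∀ w ∈ ball x₀ R, f w ≠ 0) :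
    DifferentiableOn ℂ (hlog f x₀) (ball x₀ R) := by
  intro z₀ hz₀
  set c : ℂ := hlog f x₀ z₀ with hc
  have hfz₀ : Complex.exp c = f z₀ := exp_hlog hR hf hnz z₀ hz₀
  have hfz₀ne : f z₀ ≠ 0 := hnz z₀ hz₀
  have hfd : DifferentiableAt ℂ f z₀ := hf.differentiableAt (isOpen_ball.mem_nhds hz₀)
  have hval : f z₀ * Complex.exp (-c) = 1 := by
    rw [← hfz₀, ← Complex.exp_add]
    simp
  set l : ℂ → ℂ := fun w => Complex.log (w * Complex.exp (-c)) + c with hl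
  -- eventually f z * exp(-c) ∈ ball 1 (1/2)
  have hcont_mul : ContinuousAt (fun z => f z * Complex.exp (-c)) z₀ :=
    hfd.continuousAt.mul continuousAt_const
  have ev2 : ∀ᶠ z in nhds z₀, f z * Complex.exp (-c) ∈ ball (1:ℂ) (1/2) := by
    have : ball (1:ℂ) (1/2) ∈ nhds (f z₀ * Complex.exp (-c)) := by
      rw [hval]
      exact isOpen_ball.mem_nhds (mem_ball_self (by norm_num))
    exact hcont_mul this
  have ev1 : ∀ᶠ z in nhds z₀, z ∈ ball x₀ R := isOpen_ball.mem_nhds hz₀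
  set d : E → ℂ := fun z => hlog f x₀ z - l (f z) with hd
  have hd_cont : ContinuousAt d z₀ := by
    apply ContinuousAt.sub
    · exact (hlog_contOn hR hf hnz).continuousAt (isOpen_ball.mem_nhds hz₀)
    · apply ContinuousAt.add _ continuousAt_const
      apply ContinuousAt.clog hcont_mul
      rw [hval]
      exact Complex.one_mem_slitPlane
  have hd0 : d z₀ = 0 := by
    simp only [hd, hl, ← hc, hval, Complex.log_one]
    ring
  have ev3 : ∀ᶠ z in nhds z₀, Complex.exp (d z) = 1 := by
    filter_upwards [ev1] with z hz
    have hfzne : f z ≠ 0 := hnz z hz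
    have hexp_l : Complex.exp (l (f z)) = f z := by
      rw [hl]
      simp only
      rw [Complex.exp_add, Complex.exp_log (by
        exact mul_ne_zero hfzne (Complex.exp_ne_zero _))]
      rw [mul_assoc, ← Complex.exp_add]
      simp
    rw [hd]
    simp only
    rw [Complex.exp_sub, hexp_l, exp_hlog hR hf hnz z hz, div_self hfzne]
  have ev4 : ∀ᶠ z in nhds z₀, ‖d z‖ < 1 := by
    have : Filter.Tendsto d (nhds z₀) (nhds 0) := by
      rw [← hd0]; exact hd_cont
    have := this (isOpen_ball.mem_nhds (by simp : (0:ℂ) ∈ ball 0 1))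
    filter_upwards [this] with z hz
    simpa [mem_ball, dist_zero_right] using hz
  have evEq : (fun z => hlog f x₀ z) =ᶠ[nhds z₀] fun z => l (f z) := by
    filter_upwards [ev3, ev4] with z h3 h4
    have : d z = 0 := by
      obtain ⟨k, hk⟩ := Complex.exp_eq_one_iff.mp h3
      rcases eq_or_ne k 0 with rfl | hkne
      · simpa using hk
      · exfalso
        rw [hk] at h4
        have habs : ‖(k : ℂ) * (2 * Real.pi * I)‖ = |(k:ℝ)| * (2 * Real.pi) := by
          rw [norm_mul]
          congr 1
          · rw [show ((k:ℂ)) = ((k:ℝ):ℂ) by push_cast; ring, Complex.norm_real,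
              Real.norm_eq_abs]
          · simp [norm_mul, abs_of_pos Real.pi_pos]
        rw [habs] at h4
        have hk1 : (1:ℝ) ≤ |(k:ℝ)| := by
          rw [show ((k:ℝ)) = ((k:ℤ):ℝ) from rfl, ← Int.cast_abs]
          exact_mod_cast Int.one_le_abs hkne
        nlinarith [Real.pi_gt_three]
    have := sub_eq_zero.mp this
    exact this
  have hldiff : DifferentiableAt ℂ (fun z => l (f z)) z₀ := by
    apply DifferentiableAt.add _ (differentiableAt_const c)
    apply DifferentiableAt.clog (hfd.mul (differentiableAt_const _))
    rw [show (f * fun _ => Complex.exp (-c) : E → ℂ) z₀ = 1 from hval]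
    exact Complex.one_mem_slitPlane
  exact (hldiff.congr_of_eventuallyEq evEq).differentiableWithinAt


lemma exists_log_on_ball (hR : 0 < R) (hf : DifferentiableOn ℂ f (ball x₀ R))
    (hnz : ∀ w ∈ ball x₀ R, f w ≠ 0) :
    ∃ h : E → ℂ, DifferentiableOn ℂ h (ball x₀ R) ∧
      ∀ z ∈ ball x₀ R, Complex.exp (h z) = f z :=
  ⟨hlog f x₀, hlog_diffOn hR hf hnz, exp_hlog hR hf hnz⟩


end AuxPluriharmonic

/-- Let `Ω ⊆ ℂⁿ` be open and connected, `A_p > 0` with `A_p → ∞`, and for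
each `p` let `k_p` be a nonvanishing holomorphic function on `Ω`. If continuous functions
`φ_p, φ'_p : Ω → ℝ` satisfy `φ_p − φ'_p = log|k_p|` on `Ω`, and `φ_p/A_p → φ`,
`φ'_p/A_p → φ'` locally uniformly on `Ω` with `φ, φ'` continuous, then `ψ := φ − φ'` is
pluriharmonic on `Ω`. -/
theorem limit_of_scaled_log_transition_is_pluriharmonic {n : ℕ}
    (Ω : Set (Cn n)) (hΩo : IsOpen Ω) (hΩc : IsConnected Ω)
    (A : ℕ → ℝ) (hA : ∀ p, 0 < A p) (hAtop : Filter.Tendsto A Filter.atTop Filter.atTop)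
    (k : ℕ → Cn n → ℂ) (hk : ∀ p, DifferentiableOn ℂ (k p) Ω)
    (hknz : ∀ p, ∀ z ∈ Ω, k p z ≠ 0)
    (φp φp' : ℕ → Cn n → ℝ)
    (hφpc : ∀ p, ContinuousOn (φp p) Ω) (hφp'c : ∀ p, ContinuousOn (φp' p) Ω)
    (hlog : ∀ p, ∀ z ∈ Ω, φp p z - φp' p z = Real.log ‖k p z‖)
    (φ φ' : Cn n → ℝ) (hφ : ContinuousOn φ Ω) (hφ' : ContinuousOn φ' Ω)
    (hconv : TendstoLocallyUniformlyOn (fun p z => φp p z / A p) φ Filter.atTop Ω)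
    (hconv' : TendstoLocallyUniformlyOn (fun p z => φp' p z / A p) φ' Filter.atTop Ω) :
    PluriharmonicOn (fun z => φ z - φ' z) Ω := by
  intro x hx
  obtain ⟨ε₀, hε₀, hball⟩ := Metric.isOpen_iff.mp hΩo x hx
  set r : ℝ := ε₀/2 with hrdef
  have hr : 0 < r := by positivity
  have hclos : closedBall x r ⊆ Ω := by
    intro y hy
    apply hball
    rw [mem_closedBall] at hy
    rw [mem_ball]
    have : r < ε₀ := by rw [hrdef]; linarith
    linarith
  have hBΩ : ball x r ⊆ Ω := ball_subset_closedBall.trans hclos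
  -- holomorphic logarithms on the ball
  have hlog_ex : ∀ p : ℕ, ∃ h : Cn n → ℂ, DifferentiableOn ℂ h (ball x r) ∧
      ∀ z ∈ ball x r, Complex.exp (h z) = k p z :=
    fun p => exists_log_on_ball hr ((hk p).mono hBΩ) (fun z hz => hknz p z (hBΩ hz))
  choose h hdiff hexp using hlog_ex
  -- normalized scaled logarithms
  set v : ℕ → Cn n → ℂ :=
    fun p z => (((A p)⁻¹ : ℝ) : ℂ) * (h p z - (((h p x).im : ℝ) : ℂ) * Complex.I) with hv
  have hvdiff : ∀ p, DifferentiableOn ℂ (v p) (ball x r) := by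
    intro p
    exact ((hdiff p).sub_const _).const_mul _
  have hre : ∀ p, ∀ z ∈ ball x r, (h p z).re = φp p z - φp' p z := by
    intro p z hz
    have h1 := congrArg (‖·‖) (hexp p z hz)
    rw [Complex.norm_exp] at h1
    have h2 := congrArg Real.log h1
    rw [Real.log_exp] at h2
    rw [h2, ← hlog p z (hBΩ hz)]
  have hvre : ∀ p, ∀ z ∈ ball x r, (v p z).re = φp p z / A p - φp' p z / A p := by
    intro p z hz
    rw [hv]
    simp only [Complex.re_ofReal_mul, Complex.sub_re, Complex.mul_re, Complex.I_re,
      Complex.ofReal_re, Complex.I_im, Complex.ofReal_im]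
    rw [hre p z hz]
    field_simp
    ring
  have him0 : ∀ p, (v p x).im = 0 := by
    intro p
    rw [hv]
    simp [Complex.mul_im]
  -- uniform Cauchy of the real parts on the closed ball
  set Rf : ℕ → Cn n → ℝ := fun p z => φp p z / A p - φp' p z / A p with hRf
  have h1 : TendstoUniformlyOn (fun p z => φp p z / A p) φ atTop (closedBall x r) :=
    (tendstoLocallyUniformlyOn_iff_forall_isCompact hΩo).mp hconv _ hclos
      (isCompact_closedBall x r)
  have h2 : TendstoUniformlyOn (fun p z => φp' p z / A p) φ' atTop (closedBall x r) :=
    (tendstoLocallyUniformlyOn_iff_forall_isCompact hΩo).mp hconv' _ hclos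
      (isCompact_closedBall x r)
  have hRuc : UniformCauchySeqOn Rf atTop (closedBall x r) :=
    (h1.sub h2).uniformCauchySeqOn
  have hRt : ∀ z ∈ closedBall x r, Tendsto (fun p => Rf p z) atTop (𝓝 (φ z - φ' z)) :=
    fun z hz => (h1.tendsto_at hz).sub (h2.tendsto_at hz)
  -- quantitative Cauchy estimates for v and its derivative
  have key : ∀ ε : ℝ, 0 < ε → ∃ N, ∀ p ≥ N, ∀ q ≥ N,
      (∀ z ∈ ball x (r/2), ‖v p z - v q z‖ ≤ 9*ε) ∧
      (∀ y ∈ ball x (r/4), ‖fderiv ℂ (v p) y - fderiv ℂ (v q) y‖ ≤ 108*ε/r) := by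
    intro ε hε
    obtain ⟨N, hN⟩ := (Metric.uniformCauchySeqOn_iff.mp hRuc) ε hε
    refine ⟨N, fun p hp q hq => ?_⟩
    have hRepq : ∀ z ∈ ball x r, |(v p z - v q z).re| ≤ ε := by
      intro z hz
      have := hN p hp q hq z (ball_subset_closedBall hz)
      rw [Real.dist_eq] at this
      rw [Complex.sub_re, hvre p z hz, hvre q z hz]
      exact le_of_lt this
    -- Borel–Carathéodory applied to the difference minus its value at the center
    set D : Cn n → ℂ := fun z => (v p z - v q z) - (v p x - v q x) with hD
    have hDdiff : DifferentiableOn ℂ D (ball x r) :=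
      (((hvdiff p).sub (hvdiff q))).sub_const _
    have hDx : D x = 0 := by simp [hD]
    have hxball : x ∈ ball x r := mem_ball_self hr
    have hDre : ∀ z ∈ ball x r, |(D z).re| ≤ 2*ε := by
      intro z hz
      rw [hD]
      simp only [Complex.sub_re]
      have hz1 := hRepq z hz
      have hz2 := hRepq x hxball
      calc |(v p z - v q z).re - (v p x - v q x).re|
          ≤ |(v p z - v q z).re| + |(v p x - v q x).re| := abs_sub _ _
        _ ≤ 2*ε := by linarith
    have hDb := bc2 hr (by positivity : (0:ℝ) < 2*ε) hDdiff hDx hDre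
    have hcenter : ‖v p x - v q x‖ ≤ ε := by
      have him : (v p x - v q x).im = 0 := by
        rw [Complex.sub_im, him0 p, him0 q]; ring
      have : v p x - v q x = (((v p x - v q x).re : ℝ) : ℂ) := by
        apply Complex.ext
        · simp
        · simp [him]
      rw [this, Complex.norm_real, Real.norm_eq_abs]
      exact hRepq x hxball
    have hvbound : ∀ z ∈ ball x (r/2), ‖v p z - v q z‖ ≤ 9*ε := by
      intro z hz
      calc ‖v p z - v q z‖
          = ‖D z + (v p x - v q x)‖ := by rw [hD]; ring_nf
        _ ≤ ‖D z‖ + ‖v p x - v q x‖ := norm_add_le _ _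
        _ ≤ 4*(2*ε) + ε := add_le_add (hDb z hz) hcenter
        _ = 9*ε := by ring
    refine ⟨hvbound, ?_⟩
    intro y hy
    have hsub : ball y (r/4) ⊆ ball x (r/2) := by
      intro w hw
      rw [mem_ball] at hw hy ⊢
      calc dist w x ≤ dist w y + dist y x := dist_triangle _ _ _
        _ < r/4 + r/4 := add_lt_add hw hy
        _ = r/2 := by ring
    have hsub2 : ball y (r/4) ⊆ ball x r := hsub.trans (ball_subset_ball (by linarith))
    set d : Cn n → ℂ := fun z => v p z - v q z with hd
    have hddiff : DifferentiableOn ℂ d (ball y (r/4)) :=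
      ((hvdiff p).sub (hvdiff q)).mono hsub2
    have hdbound : ∀ z ∈ ball y (r/4), ‖d z‖ ≤ 9*ε :=
      fun z hz => hvbound z (hsub hz)
    have := derivBound (by positivity : (0:ℝ) < r/4) (by positivity : (0:ℝ) < 9*ε)
      hddiff hdbound
    have hyx : y ∈ ball x r := ball_subset_ball (by linarith) hy
    have hfd : fderiv ℂ d y = fderiv ℂ (v p) y - fderiv ℂ (v q) y := by
      apply fderiv_sub
      · exact (hvdiff p).differentiableAt (isOpen_ball.mem_nhds hyx)
      · exact (hvdiff q).differentiableAt (isOpen_ball.mem_nhds hyx)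
    rw [hfd] at this
    calc ‖fderiv ℂ (v p) y - fderiv ℂ (v q) y‖ ≤ 3*(9*ε)/(r/4) := this
      _ = 108*ε/r := by field_simp; ring
  -- uniform Cauchy sequences
  have hvc : UniformCauchySeqOn v atTop (ball x (r/2)) := by
    rw [Metric.uniformCauchySeqOn_iff]
    intro ε' hε'
    obtain ⟨N, hN⟩ := key (ε'/18) (by positivity)
    refine ⟨N, fun p hp q hq z hz => ?_⟩
    have := (hN p hp q hq).1 z hz
    rw [dist_eq_norm]
    calc ‖v p z - v q z‖ ≤ 9*(ε'/18) := this
      _ < ε' := by linarith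
  have hv'c : UniformCauchySeqOn (fun p z => fderiv ℂ (v p) z) atTop (ball x (r/4)) := by
    rw [Metric.uniformCauchySeqOn_iff]
    intro ε' hε'
    obtain ⟨N, hN⟩ := key (ε'*r/216) (by positivity)
    refine ⟨N, fun p hp q hq z hz => ?_⟩
    have := (hN p hp q hq).2 z hz
    rw [dist_eq_norm]
    calc ‖fderiv ℂ (v p) z - fderiv ℂ (v q) z‖ ≤ 108*(ε'*r/216)/r := this
      _ = ε'/2 := by field_simp; ring
      _ < ε' := by linarith
  -- limits
  have hgc : ∀ z ∈ ball x (r/2), CauchySeq (fun p => v p z) := fun z hz => hvc.cauchySeq hz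
  have hGc : ∀ z ∈ ball x (r/4), CauchySeq (fun p => fderiv ℂ (v p) z) :=
    fun z hz => hv'c.cauchySeq hz
  set g : Cn n → ℂ := fun z => limUnder atTop (fun p => v p z) with hg
  set G : Cn n → (Cn n →L[ℂ] ℂ) := fun z => limUnder atTop (fun p => fderiv ℂ (v p) z) with hG
  have hgt : ∀ z ∈ ball x (r/2), Tendsto (fun p => v p z) atTop (𝓝 (g z)) :=
    fun z hz => (hgc z hz).tendsto_limUnder
  have hGt : ∀ z ∈ ball x (r/4), Tendsto (fun p => fderiv ℂ (v p) z) atTop (𝓝 (G z)) :=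
    fun z hz => (hGc z hz).tendsto_limUnder
  have hquart : ball x (r/4) ⊆ ball x (r/2) := ball_subset_ball (by linarith)
  have hv'u : TendstoUniformlyOn (fun p z => fderiv ℂ (v p) z) G atTop (ball x (r/4)) :=
    hv'c.tendstoUniformlyOn_of_tendsto hGt
  have hder : ∀ z ∈ ball x (r/4), HasFDerivAt g (G z) z := by
    intro z hz
    apply hasFDerivAt_of_tendstoUniformlyOn isOpen_ball hv'u
      (fun p y hy => ?_) (fun y hy => hgt y (hquart hy)) hz
    have hyx : y ∈ ball x r := (ball_subset_ball (by linarith)) hy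
    exact ((hvdiff p).differentiableAt (isOpen_ball.mem_nhds hyx)).hasFDerivAt
  -- real parts converge to ψ
  have hrepsi : ∀ y ∈ ball x (r/4), φ y - φ' y = (g y).re := by
    intro y hy
    have hyhalf : y ∈ ball x (r/2) := hquart hy
    have hyr : y ∈ ball x r := ball_subset_ball (by linarith) hy
    have t1 : Tendsto (fun p => (v p y).re) atTop (𝓝 ((g y).re)) :=
      (Complex.continuous_re.continuousAt).tendsto.comp (hgt y hyhalf)
    have t2 : Tendsto (fun p => (v p y).re) atTop (𝓝 (φ y - φ' y)) := by
      have := hRt y (ball_subset_closedBall hyr)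
      apply this.congr
      intro p
      rw [hvre p y hyr]
    exact tendsto_nhds_unique t2 t1
  exact ⟨ball x (r/4), isOpen_ball, mem_ball_self (by positivity),
    (ball_subset_ball (by linarith)).trans hBΩ, g,
    fun z hz => ((hder z hz).differentiableAt).differentiableWithinAt,
    hrepsi⟩
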